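/- Let 1 ≤ i ≤ n. If i is even, then the sum of τ(i) over all down-up alternating permutations τ of {1,…,n} equals (n+1)·E_n − e(Z_{n,i}); if i is odd, then the sum of τ(i) over all up-down alternating permutations τ of {1,…,n} equals (n+1)·E_n − e(Z_{n,i}). Equivalently, the average of τ(i) over down-up alternating permutations (i even), respectively up-down alternating permutations (i odd), of {1,…,n} equals n + 1 − e(Z_{n,i})/E_n. -/

import Mathlib

open scoped Classical

/-- A permutation of `{1,…,m}` (0-indexed on `Fin m`) is down-up alternating if
`τ(1) > τ(2) < τ(3) > ⋯`. -/
def DownUp {m : ℕ} (τ : Equiv.Perm (Fin m)) : Prop :=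
  ∀ i : ℕ, ∀ h : i + 1 < m,
    if Even i then τ ⟨i + 1, h⟩ < τ ⟨i, Nat.lt_of_succ_lt h⟩
    else τ ⟨i, Nat.lt_of_succ_lt h⟩ < τ ⟨i + 1, h⟩

/-- Up-down alternating: `τ(1) < τ(2) > τ(3) < ⋯`. -/
def UpDown {m : ℕ} (τ : Equiv.Perm (Fin m)) : Prop :=
  ∀ i : ℕ, ∀ h : i + 1 < m,
    if Even i then τ ⟨i, Nat.lt_of_succ_lt h⟩ < τ ⟨i + 1, h⟩
    else τ ⟨i + 1, h⟩ < τ ⟨i, Nat.lt_of_succ_lt h⟩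

/-- The Euler number `E_m`: the number of down-up alternating permutations of `{1,…,m}`. -/
noncomputable def eulerNumber (m : ℕ) : ℕ :=
  Nat.card {τ : Equiv.Perm (Fin m) // DownUp τ}

/-- The generating (cover) relations of the augmented zigzag poset `Z_{n,i}` on `{0,…,n}`:
`0 ⪯ i`; for `1 ≤ j < i`, `j ⪯ j+1` iff `i - j` is odd; for `i ≤ j < n`, `j ⪯ j+1` iff
`j - i` is odd. -/
def ZRel (n i : ℕ) (x y : ℕ) : Prop :=
  (x = 0 ∧ y = i) ∨
  (y = x + 1 ∧ 1 ≤ x ∧ x < i ∧ Odd (i - x)) ∨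
  (y = x + 1 ∧ i ≤ x ∧ x < n ∧ Odd (x - i)) ∨
  (x = y + 1 ∧ 1 ≤ y ∧ y < i ∧ Even (i - y)) ∨
  (x = y + 1 ∧ i ≤ y ∧ y < n ∧ Even (y - i))

/-- A linear extension of `Z_{n,i}`: a bijection `σ : {0,…,n} → {0,…,n}` with `σ(a) < σ(b)`
whenever `a ≺ b` in `Z_{n,i}` (equivalently, on the generating relations). -/
def IsLinExtZ (n i : ℕ) (σ : Equiv.Perm (Fin (n + 1))) : Prop :=
  ∀ a b : Fin (n + 1), ZRel n i (a : ℕ) (b : ℕ) → σ a < σ b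

/-- `e(Z_{n,i})`, the number of linear extensions of the augmented zigzag poset. -/
noncomputable def eZ (n i : ℕ) : ℕ :=
  Nat.card {σ : Equiv.Perm (Fin (n + 1)) // IsLinExtZ n i σ}

/-! ### Auxiliary machinery -/

/-- Uniform alternation condition depending on parity of `i + j`. -/
def Alt (i : ℕ) {n : ℕ} (τ : Equiv.Perm (Fin n)) : Prop :=
  ∀ j : ℕ, ∀ h : j + 1 < n,
    if Even (i + j) then τ ⟨j + 1, h⟩ < τ ⟨j, Nat.lt_of_succ_lt h⟩
    else τ ⟨j, Nat.lt_of_succ_lt h⟩ < τ ⟨j + 1, h⟩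

lemma alt_iff_downUp {n i : ℕ} (hi : Even i) (τ : Equiv.Perm (Fin n)) :
    Alt i τ ↔ DownUp τ := by
  have hpar : ∀ j : ℕ, Even (i + j) ↔ Even j := by
    intro j; rw [Nat.even_add]; exact ⟨fun h => h.mp hi, fun h => ⟨fun _ => h, fun _ => hi⟩⟩
  constructor <;> intro H j h <;> have := H j h
  · rwa [if_congr (hpar j) rfl rfl] at this
  · rwa [if_congr (hpar j) rfl rfl]

lemma alt_iff_upDown {n i : ℕ} (hi : Odd i) (τ : Equiv.Perm (Fin n)) :
    Alt i τ ↔ UpDown τ := by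
  have hpar : ∀ j : ℕ, Even (i + j) ↔ ¬ Even j := by
    intro j
    rw [Nat.odd_iff] at hi
    rw [Nat.even_iff, Nat.even_iff]
    omega
  constructor <;> intro H j h <;> have := H j h
  · rwa [if_congr (hpar j) rfl rfl, ite_not] at this
  · rwa [if_congr (hpar j) rfl rfl, ite_not]

/-- Build a permutation of `{0,…,n}` from a value `t` (the value at `0`) and a permutation
`τ` of `Fin n` (placed, reversed, at positions `1,…,n`, skipping the value `t`). -/
def mkExt (n : ℕ) (t : Fin (n + 1)) (τ : Equiv.Perm (Fin n)) : Equiv.Perm (Fin (n + 1)) :=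
  (finSuccEquiv' 0).trans ((Equiv.optionCongr (τ.trans Fin.revPerm)).trans
    (finSuccEquiv' t).symm)

lemma mkExt_zero {n : ℕ} (t : Fin (n + 1)) (τ : Equiv.Perm (Fin n)) :
    mkExt n t τ 0 = t := by
  simp [mkExt, finSuccEquiv'_at, finSuccEquiv'_symm_none]

lemma mkExt_succ {n : ℕ} (t : Fin (n + 1)) (τ : Equiv.Perm (Fin n)) (j : Fin n) :
    mkExt n t τ j.succ = t.succAbove (τ j).rev := by
  have h0 : (finSuccEquiv' (0 : Fin (n + 1))) j.succ = some j := by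
    have := finSuccEquiv'_succAbove (0 : Fin (n + 1)) j
    rwa [Fin.zero_succAbove] at this
  simp [mkExt, h0, finSuccEquiv'_symm_some]

lemma mkExt_lt_iff {n : ℕ} (t : Fin (n + 1)) (τ : Equiv.Perm (Fin n)) (a b : Fin n) :
    mkExt n t τ a.succ < mkExt n t τ b.succ ↔ τ b < τ a := by
  rw [mkExt_succ, mkExt_succ, Fin.succAbove_lt_succAbove_iff, Fin.rev_lt_rev]

lemma mkExt_zero_lt_iff {n : ℕ} (t : Fin (n + 1)) (τ : Equiv.Perm (Fin n)) (b : Fin n) :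
    mkExt n t τ 0 < mkExt n t τ b.succ ↔ (t : ℕ) + (τ b : ℕ) + 1 ≤ n := by
  rw [mkExt_zero, mkExt_succ, Fin.lt_succAbove_iff_le_castSucc, Fin.le_def,
    Fin.coe_castSucc, Fin.val_rev]
  have := (τ b).isLt
  omega

lemma aux_lt_im1 {n i : ℕ} (hi1 : 1 ≤ i) (hin : i ≤ n) : i - 1 < n := by omega

/-- The key combinatorial equivalence. -/
lemma isLinExtZ_mkExt_iff {n i : ℕ} (hi1 : 1 ≤ i) (hin : i ≤ n)
    (t : Fin (n + 1)) (τ : Equiv.Perm (Fin n)) :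
    IsLinExtZ n i (mkExt n t τ) ↔
      Alt i τ ∧ (t : ℕ) + (τ ⟨i - 1, aux_lt_im1 hi1 hin⟩ : ℕ) + 1 ≤ n := by
  have hsucc : ∀ (j : ℕ) (hj : j < n), ((⟨j, hj⟩ : Fin n).succ : Fin (n + 1)) = ⟨j + 1, by omega⟩ := by
    intro j hj; rfl
  constructor
  · intro H
    constructor
    · -- alternation
      intro j h
      have hZ : if Even (i + j) then ZRel n i (j + 1) (j + 2) else ZRel n i (j + 2) (j + 1) := by
        rcases Nat.even_or_odd (i + j) with hp | hp
        · rw [if_pos hp]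
          rw [Nat.even_iff] at hp
          by_cases hc : j + 1 < i
          · exact Or.inr (Or.inl ⟨rfl, by omega, hc, by rw [Nat.odd_iff]; omega⟩)
          · exact Or.inr (Or.inr (Or.inl ⟨rfl, by omega, by omega, by rw [Nat.odd_iff]; omega⟩))
        · rw [if_neg (Nat.not_even_iff_odd.mpr hp)]
          rw [Nat.odd_iff] at hp
          by_cases hc : j + 1 < i
          · exact Or.inr (Or.inr (Or.inr (Or.inl ⟨rfl, by omega, hc, by rw [Nat.even_iff]; omega⟩)))
          · exact Or.inr (Or.inr (Or.inr (Or.inr ⟨rfl, by omega, by omega, by rw [Nat.even_iff]; omega⟩)))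
      by_cases hp : Even (i + j)
      · rw [if_pos hp] at hZ ⊢
        rw [← mkExt_lt_iff t τ ⟨j, by omega⟩ ⟨j + 1, by omega⟩]
        apply H
        rw [hsucc, hsucc]
        exact hZ
      · rw [if_neg hp] at hZ ⊢
        rw [← mkExt_lt_iff t τ ⟨j + 1, by omega⟩ ⟨j, by omega⟩]
        apply H
        rw [hsucc, hsucc]
        exact hZ
    · -- bound
      rw [← mkExt_zero_lt_iff t τ ⟨i - 1, by omega⟩]
      apply H
      rw [hsucc]
      exact Or.inl ⟨rfl, by simp only [Fin.val_succ]; omega⟩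
  · rintro ⟨hAlt, hb⟩ a b hZ
    rcases hZ with ⟨ha, hbi⟩ | ⟨hab, h1, h2, h3⟩ | ⟨hab, h1, h2, h3⟩ |
      ⟨hab, h1, h2, h3⟩ | ⟨hab, h1, h2, h3⟩
    · -- 0 ⪯ i
      have haz : a = 0 := by ext; simpa using ha
      have hbz : b = (⟨i - 1, by omega⟩ : Fin n).succ := by ext; simp [hbi]; omega
      rw [haz, hbz, mkExt_zero_lt_iff]
      exact hb
    · -- ascent, x < i, Odd (i - x)
      obtain ⟨j, hj⟩ : ∃ j, (a : ℕ) = j + 1 := ⟨(a : ℕ) - 1, by omega⟩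
      have hjn : j + 1 < n := by omega
      have hτ := hAlt j hjn
      rw [if_pos (by rw [Nat.odd_iff] at h3; rw [Nat.even_iff]; omega)] at hτ
      have hlt := (mkExt_lt_iff t τ ⟨j, by omega⟩ ⟨j + 1, hjn⟩).mpr hτ
      have haeq : a = (⟨j, by omega⟩ : Fin n).succ := by ext; simp only [Fin.val_succ]; omega
      have hbeq : b = (⟨j + 1, hjn⟩ : Fin n).succ := by ext; simp only [Fin.val_succ]; omega
      rwa [← haeq, ← hbeq] at hlt
    · -- ascent, i ≤ x < n, Odd (x - i)
      obtain ⟨j, hj⟩ : ∃ j, (a : ℕ) = j + 1 := ⟨(a : ℕ) - 1, by omega⟩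
      have hjn : j + 1 < n := by omega
      have hτ := hAlt j hjn
      rw [if_pos (by rw [Nat.odd_iff] at h3; rw [Nat.even_iff]; omega)] at hτ
      have hlt := (mkExt_lt_iff t τ ⟨j, by omega⟩ ⟨j + 1, hjn⟩).mpr hτ
      have haeq : a = (⟨j, by omega⟩ : Fin n).succ := by ext; simp only [Fin.val_succ]; omega
      have hbeq : b = (⟨j + 1, hjn⟩ : Fin n).succ := by ext; simp only [Fin.val_succ]; omega
      rwa [← haeq, ← hbeq] at hlt
    · -- descent, y < i, Even (i - y)
      obtain ⟨j, hj⟩ : ∃ j, (b : ℕ) = j + 1 := ⟨(b : ℕ) - 1, by omega⟩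
      have hjn : j + 1 < n := by omega
      have hτ := hAlt j hjn
      rw [if_neg (by rw [Nat.even_iff] at h3 ⊢; omega)] at hτ
      have hlt := (mkExt_lt_iff t τ ⟨j + 1, hjn⟩ ⟨j, by omega⟩).mpr hτ
      have haeq : a = (⟨j + 1, hjn⟩ : Fin n).succ := by ext; simp only [Fin.val_succ]; omega
      have hbeq : b = (⟨j, by omega⟩ : Fin n).succ := by ext; simp only [Fin.val_succ]; omega
      rwa [← haeq, ← hbeq] at hlt
    · -- descent, i ≤ y < n, Even (y - i)
      obtain ⟨j, hj⟩ : ∃ j, (b : ℕ) = j + 1 := ⟨(b : ℕ) - 1, by omega⟩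
      have hjn : j + 1 < n := by omega
      have hτ := hAlt j hjn
      rw [if_neg (by rw [Nat.even_iff] at h3 ⊢; omega)] at hτ
      have hlt := (mkExt_lt_iff t τ ⟨j + 1, hjn⟩ ⟨j, by omega⟩).mpr hτ
      have haeq : a = (⟨j + 1, hjn⟩ : Fin n).succ := by ext; simp only [Fin.val_succ]; omega
      have hbeq : b = (⟨j, by omega⟩ : Fin n).succ := by ext; simp only [Fin.val_succ]; omega
      rwa [← haeq, ← hbeq] at hlt

/-- Inverse construction: recover `τ` from `σ`. -/
noncomputable def unmkExt {n : ℕ} (σ : Equiv.Perm (Fin (n + 1))) : Equiv.Perm (Fin n) :=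
  (Equiv.removeNone ((finSuccEquiv' 0).symm.trans (σ.trans (finSuccEquiv' (σ 0))))).trans
    Fin.revPerm

lemma mkExt_unmkExt {n : ℕ} (σ : Equiv.Perm (Fin (n + 1))) :
    mkExt n (σ 0) (unmkExt σ) = σ := by
  set C : Option (Fin n) ≃ Option (Fin n) :=
    (finSuccEquiv' 0).symm.trans (σ.trans (finSuccEquiv' (σ 0))) with hC
  have h0 : C none = none := by
    simp [hC, finSuccEquiv'_symm_none, finSuccEquiv'_at]
  have hoc : Equiv.optionCongr (Equiv.removeNone C) = C := by
    ext x
    cases x with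
    | none => simp [h0]
    | some a =>
      have hex : ∃ b, C (some a) = some b := by
        cases hca : C (some a) with
        | none => exact absurd (C.injective (hca.trans h0.symm)) (by simp)
        | some b => exact ⟨b, rfl⟩
      obtain ⟨b, hb⟩ := hex
      have := Equiv.removeNone_some C ⟨b, hb⟩
      simp [this, h0]
  have htr : (unmkExt σ).trans Fin.revPerm = Equiv.removeNone C := by
    unfold unmkExt
    rw [← hC, Equiv.trans_assoc]
    ext x
    simp
  unfold mkExt
  rw [htr, hoc, hC]
  ext x
  simp

lemma mkExt_inj {n : ℕ} (t t' : Fin (n + 1)) (τ τ' : Equiv.Perm (Fin n))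
    (h : mkExt n t τ = mkExt n t' τ') : t = t' ∧ τ = τ' := by
  have ht : t = t' := by
    have := congrArg (fun σ : Equiv.Perm (Fin (n+1)) => σ 0) h
    simpa [mkExt_zero] using this
  refine ⟨ht, ?_⟩
  ext j
  have := congrArg (fun σ : Equiv.Perm (Fin (n+1)) => σ j.succ) h
  simp only [mkExt_succ] at this
  rw [ht] at this
  have := Fin.succAbove_right_injective (p := t') this
  have h2 := Fin.rev_injective this
  exact congrArg Fin.val h2

lemma eZ_eq_sum {n i : ℕ} (hi1 : 1 ≤ i) (hin : i ≤ n) :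
    eZ n i = ∑ τ ∈ Finset.univ.filter (fun τ : Equiv.Perm (Fin n) => Alt i τ),
      (n - (τ ⟨i - 1, aux_lt_im1 hi1 hin⟩ : ℕ)) := by
  have h1 : eZ n i = (Finset.univ.filter (fun σ : Equiv.Perm (Fin (n+1)) =>
      IsLinExtZ n i σ)).card := by
    rw [eZ, Nat.card_eq_fintype_card, Fintype.card_subtype]
  have hb : ((Finset.univ.filter (fun τ : Equiv.Perm (Fin n) => Alt i τ)).sigma
      (fun τ => Finset.range (n - (τ ⟨i - 1, by omega⟩ : ℕ)))).card
      = (Finset.univ.filter fun σ : Equiv.Perm (Fin (n+1)) => IsLinExtZ n i σ).card := by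
    apply Finset.card_bij
      (i := fun p hp => mkExt n ⟨p.2, by
        simp only [Finset.mem_sigma, Finset.mem_range] at hp
        omega⟩ p.1)
    · -- maps into
      intro p hp
      simp only [Finset.mem_sigma, Finset.mem_range, Finset.mem_filter, Finset.mem_univ,
        true_and] at hp ⊢
      rw [isLinExtZ_mkExt_iff hi1 hin]
      refine ⟨hp.1, ?_⟩
      have := (p.1 ⟨i - 1, by omega⟩).isLt
      simp only
      omega
    · -- injective
      intro p hp q hq heq
      obtain ⟨ht, hτ⟩ := mkExt_inj _ _ _ _ heq
      have h2 : p.2 = q.2 := congrArg Fin.val ht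
      obtain ⟨τ, c⟩ := p
      obtain ⟨τ', c'⟩ := q
      simp_all
    · -- surjective
      intro σ hσ
      simp only [Finset.mem_filter, Finset.mem_univ, true_and] at hσ
      have hσ' : IsLinExtZ n i (mkExt n (σ 0) (unmkExt σ)) := by
        rw [mkExt_unmkExt]; exact hσ
      rw [isLinExtZ_mkExt_iff hi1 hin] at hσ'
      refine ⟨⟨unmkExt σ, (σ 0 : ℕ)⟩, ?_, ?_⟩
      · simp only [Finset.mem_sigma, Finset.mem_range, Finset.mem_filter, Finset.mem_univ,
          true_and]
        exact ⟨hσ'.1, by have := hσ'.2; omega⟩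
      · have h0 : (⟨(σ 0 : ℕ), by omega⟩ : Fin (n + 1)) = σ 0 := by ext; rfl
        rw [h0, mkExt_unmkExt]
  rw [h1, ← hb, Finset.card_sigma]
  simp only [Finset.card_range]

lemma card_upDown_eq {n : ℕ} :
    (Finset.univ.filter (fun τ : Equiv.Perm (Fin n) => UpDown τ)).card =
      (Finset.univ.filter (fun τ : Equiv.Perm (Fin n) => DownUp τ)).card := by
  apply Finset.card_bij (i := fun τ _ => τ.trans Fin.revPerm)
  · intro τ hτ
    simp only [Finset.mem_filter, Finset.mem_univ, true_and] at hτ ⊢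
    intro j h
    have := hτ j h
    by_cases hp : Even j <;> simp [hp, Equiv.trans_apply, Fin.rev_lt_rev] at this ⊢ <;> exact this
  · intro τ _ τ' _ h
    have := congrArg (fun e => e.trans Fin.revPerm) h
    simp only [Equiv.trans_assoc] at this
    have hrr : (Fin.revPerm (n := n)).trans Fin.revPerm = Equiv.refl _ := by
      ext x; simp
    rwa [hrr, Equiv.trans_refl, Equiv.trans_refl] at this
  · intro σ hσ
    simp only [Finset.mem_filter, Finset.mem_univ, true_and] at hσ
    refine ⟨σ.trans Fin.revPerm, ?_, ?_⟩
    · simp only [Finset.mem_filter, Finset.mem_univ, true_and]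
      intro j h
      have := hσ j h
      by_cases hp : Even j <;> simp [hp, Equiv.trans_apply, Fin.rev_lt_rev] at this ⊢ <;> exact this
    · ext x
      simp

lemma sum_final {n i : ℕ} (hi1 : 1 ≤ i) (hin : i ≤ n)
    (S : Finset (Equiv.Perm (Fin n)))
    (hcard : (S.card : ℤ) = (eulerNumber n : ℤ))
    (hez : (eZ n i : ℤ) = ∑ τ ∈ S, ((n - (τ ⟨i - 1, aux_lt_im1 hi1 hin⟩ : ℕ) : ℕ) : ℤ)) :
    ((∑ τ ∈ S, ((τ ⟨i - 1, aux_lt_im1 hi1 hin⟩ : ℕ) + 1) : ℕ) : ℤ) =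
      (n + 1) * eulerNumber n - eZ n i := by
  have hterm : ∀ τ ∈ S, (((τ ⟨i - 1, by omega⟩ : ℕ) + 1 : ℕ) : ℤ) =
      ((n : ℤ) + 1) - ((n - (τ ⟨i - 1, by omega⟩ : ℕ) : ℕ) : ℤ) := by
    intro τ _
    have h1 := (τ ⟨i - 1, by omega⟩).isLt
    omega
  rw [Nat.cast_sum, Finset.sum_congr rfl hterm, Finset.sum_sub_distrib, Finset.sum_const,
    nsmul_eq_mul, hcard, ← hez]
  ring

/-- for `1 ≤ i ≤ n`, the sum of `τ(i)` over all down-up (if `i` even), resp.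
up-down (if `i` odd), alternating permutations of `{1,…,n}` equals `(n+1)·E_n - e(Z_{n,i})`
(so the corresponding average is `n + 1 - e(Z_{n,i})/E_n`). -/
theorem sum_ith_entry_complement (n i : ℕ) (hi1 : 1 ≤ i) (hin : i ≤ n) :
    (Even i →
      ((∑ τ ∈ Finset.univ.filter (fun τ : Equiv.Perm (Fin n) => DownUp τ),
          ((τ ⟨i - 1, by omega⟩ : ℕ) + 1) : ℕ) : ℤ) =
        (n + 1) * eulerNumber n - eZ n i) ∧
    (Odd i →
      ((∑ τ ∈ Finset.univ.filter (fun τ : Equiv.Perm (Fin n) => UpDown τ),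
          ((τ ⟨i - 1, by omega⟩ : ℕ) + 1) : ℕ) : ℤ) =
        (n + 1) * eulerNumber n - eZ n i) := by
  have hE : ((Finset.univ.filter (fun τ : Equiv.Perm (Fin n) => DownUp τ)).card : ℤ) =
      (eulerNumber n : ℤ) := by
    rw [eulerNumber, Nat.card_eq_fintype_card, Fintype.card_subtype]
  constructor
  · intro hEven
    have hfilt : Finset.univ.filter (fun τ : Equiv.Perm (Fin n) => Alt i τ) =
        Finset.univ.filter (fun τ : Equiv.Perm (Fin n) => DownUp τ) := by
      apply Finset.filter_congr
      intro τ _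
      rw [alt_iff_downUp hEven]
    apply sum_final hi1 hin _ hE
    rw [eZ_eq_sum hi1 hin, hfilt, Nat.cast_sum]
  · intro hOdd
    have hE' : ((Finset.univ.filter (fun τ : Equiv.Perm (Fin n) => UpDown τ)).card : ℤ) =
        (eulerNumber n : ℤ) := by
      rw [card_upDown_eq]; exact hE
    have hfilt : Finset.univ.filter (fun τ : Equiv.Perm (Fin n) => Alt i τ) =
        Finset.univ.filter (fun τ : Equiv.Perm (Fin n) => UpDown τ) := by
      apply Finset.filter_congr
      intro τ _
      rw [alt_iff_upDown hOdd]
    apply sum_final hi1 hin _ hE'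
    rw [eZ_eq_sum hi1 hin, hfilt, Nat.cast_sum]
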